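/- Let ψ be any 2n-qubit hypermatrix (n ≥ 1) with vectorization |ψ⟩ ∈ ℂ^{4^n}. Then hdet(ψ̂) = ((−1)^n / 2) · |ψ⟩^T σ_y^{⊗2n} |ψ⟩. Equivalently, the symmetric matrix Ê_n of the quadratic form hdet satisfies Ê_n = ((−1)^n / 2) σ_y^{⊗2n}. -/

import Mathlib

/-- The `k`-th bit (big-endian, `0`-based) of an index `j`, so that for `j < 2^n`,
`j = Σ_k (bit j k) · 2^{n-1-k}` (lexicographic order of bit strings). -/
def qbit (n : ℕ) (j : ℕ) (k : Fin n) : Fin 2 :=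
  ⟨j / 2 ^ (n - 1 - (k : ℕ)) % 2, by omega⟩

/-- The vectorization `|ψ⟩ ∈ ℂ^{4^n}` of a `2n`-qubit hypermatrix, listing the entries in
lexicographic order of the binary index `j = Σ_k i_k 2^{2n−k}`. -/
noncomputable def vecQ (n : ℕ) (ψ : (Fin (2 * n) → Fin 2) → ℂ) : Fin (4 ^ n) → ℂ :=
  fun j => ψ (qbit (2 * n) (j : ℕ))

/-- The second Pauli matrix `σ_y = [[0, −i], [i, 0]]`. -/
noncomputable def pauliY : Matrix (Fin 2) (Fin 2) ℂ :=
  !![0, -Complex.I; Complex.I, 0]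

/-- The `2n`-fold Kronecker power `σ_y^{⊗2n}` as a `4^n × 4^n` matrix
(indices encoded lexicographically by their `2n` bits). -/
noncomputable def pauliYPow (n : ℕ) : Matrix (Fin (4 ^ n)) (Fin (4 ^ n)) ℂ :=
  fun i j => ∏ k : Fin (2 * n), pauliY (qbit (2 * n) (i : ℕ) k) (qbit (2 * n) (j : ℕ) k)

/-- The combinatorial hyperdeterminant of an order-`N` side-2 hypermatrix:
`hdet H = Σ_{σ_2,...,σ_N ∈ S_2} (−1)^m H_{0σ_2(0)...σ_N(0)} H_{1σ_2(1)...σ_N(1)}`,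
where `m` is the number of the permutations `σ_2,...,σ_N` that are transpositions. -/
noncomputable def hdetQ (N : ℕ) (hN : 0 < N) (H : (Fin N → Fin 2) → ℂ) : ℂ :=
  ∑ σ : Fin N → Equiv.Perm (Fin 2),
    if σ ⟨0, hN⟩ = 1 then
      (∏ k, ((Equiv.Perm.sign (σ k) : ℤ) : ℂ)) *
        (H (fun k => σ k 0) * H (fun k => σ k 1))
    else 0

noncomputable def qbitEquiv (N : ℕ) : Fin (2 ^ N) ≃ (Fin N → Fin 2) :=
  finFunctionFinEquiv.symm.trans (Equiv.arrowCongr Fin.revPerm (Equiv.refl _))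

lemma qbit_eq_equiv (N : ℕ) (j : Fin (2 ^ N)) : qbit N (j : ℕ) = qbitEquiv N j := by
  funext k
  simp only [qbitEquiv, qbit, Equiv.trans_apply, Equiv.arrowCongr_apply, Equiv.coe_refl,
    Function.comp_apply, Equiv.symm_symm]
  ext
  simp only [finFunctionFinEquiv, Equiv.ofRightInverseOfCardLE_symm_apply]
  congr 2
  simp [Fin.val_rev]
  omega

def permTwo : Fin 2 ≃ Equiv.Perm (Fin 2) where
  toFun b := if b = 0 then 1 else Equiv.swap 0 1
  invFun σ := σ 0
  left_inv := by decide
  right_inv := by decide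

def flipB : Fin 2 → Fin 2 := fun b => b + 1

noncomputable def sgnB : Fin 2 → ℂ := fun b => if b = 0 then 1 else -1

lemma permTwo_apply_zero (b : Fin 2) : permTwo b 0 = b := by
  fin_cases b <;> simp [permTwo]

lemma permTwo_apply_one (b : Fin 2) : permTwo b 1 = flipB b := by
  fin_cases b <;> simp [permTwo, flipB]

lemma permTwo_eq_one_iff (b : Fin 2) : permTwo b = 1 ↔ b = 0 := by
  fin_cases b <;> simp [permTwo]

lemma sign_permTwo (b : Fin 2) : ((Equiv.Perm.sign (permTwo b) : ℤ) : ℂ) = sgnB b := by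
  fin_cases b <;> simp [permTwo, sgnB]

lemma flipB_flipB (b : Fin 2) : flipB (flipB b) = b := by revert b; decide

lemma flipB_eq_zero_iff (b : Fin 2) : flipB b = 0 ↔ ¬ (b = 0) := by revert b; decide

lemma sgnB_flipB (b : Fin 2) : sgnB (flipB b) = - sgnB b := by
  fin_cases b <;> simp [flipB, sgnB]

lemma pauliY_flip (b : Fin 2) : pauliY b (flipB b) = -Complex.I * sgnB b := by
  fin_cases b <;> simp [pauliY, flipB, sgnB]

lemma pauliY_ne_flip {a b : Fin 2} (h : b ≠ flipB a) : pauliY a b = 0 := by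
  fin_cases a <;> fin_cases b <;> simp_all [pauliY, flipB]

lemma pauliY_antisymm (a b : Fin 2) : pauliY b a = (-1) * pauliY a b := by
  fin_cases a <;> fin_cases b <;> simp [pauliY]

/-- The basic summand. -/
noncomputable def Fc (N : ℕ) (ψ : (Fin N → Fin 2) → ℂ) (x : Fin N → Fin 2) : ℂ :=
  (∏ k, sgnB (x k)) * (ψ x * ψ (flipB ∘ x))

lemma hdetQ_eq (N : ℕ) (hN : 0 < N) (ψ : (Fin N → Fin 2) → ℂ) :
    hdetQ N hN ψ = ∑ x : Fin N → Fin 2, if x ⟨0, hN⟩ = 0 then Fc N ψ x else 0 := by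
  rw [hdetQ, ← Fintype.sum_equiv (Equiv.piCongrRight fun _ : Fin N => permTwo)
    (fun x => if x ⟨0, hN⟩ = 0 then Fc N ψ x else 0) _ ?_]
  intro x
  simp only [Equiv.piCongrRight_apply, Pi.map_apply, permTwo_eq_one_iff, permTwo_apply_zero,
    permTwo_apply_one, sign_permTwo, Fc]
  rfl

lemma prod_pauli (N : ℕ) (x y : Fin N → Fin 2) :
    (∏ k, pauliY (x k) (y k)) =
      if y = flipB ∘ x then (-Complex.I) ^ N * ∏ k, sgnB (x k) else 0 := by
  split
  · next h =>
    subst h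
    calc (∏ k, pauliY (x k) ((flipB ∘ x) k)) = ∏ k, (-Complex.I) * sgnB (x k) := by
          exact Finset.prod_congr rfl fun k _ => pauliY_flip (x k)
      _ = (-Complex.I) ^ N * ∏ k, sgnB (x k) := by
          rw [Finset.prod_mul_distrib, Finset.prod_const, Finset.card_univ, Fintype.card_fin]
  · next h =>
    obtain ⟨k, hk⟩ := Function.ne_iff.mp h
    exact Finset.prod_eq_zero (Finset.mem_univ k) (pauliY_ne_flip hk)

lemma Fc_flip (N : ℕ) (hE : Even N) (ψ : (Fin N → Fin 2) → ℂ) (x : Fin N → Fin 2) :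
    Fc N ψ (flipB ∘ x) = Fc N ψ x := by
  unfold Fc
  have h1 : flipB ∘ (flipB ∘ x) = x := by funext k; exact flipB_flipB (x k)
  rw [h1]
  have h2 : (∏ k, sgnB ((flipB ∘ x) k)) = ∏ k, sgnB (x k) := by
    calc (∏ k, sgnB ((flipB ∘ x) k)) = ∏ k, (-1 : ℂ) * sgnB (x k) := by
          exact Finset.prod_congr rfl fun k _ => by
            simpa using sgnB_flipB (x k)
      _ = (-1 : ℂ) ^ N * ∏ k, sgnB (x k) := by
          rw [Finset.prod_mul_distrib, Finset.prod_const, Finset.card_univ, Fintype.card_fin]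
      _ = ∏ k, sgnB (x k) := by rw [hE.neg_one_pow, one_mul]
  rw [h2, mul_comm (ψ (flipB ∘ x))]

noncomputable def flipEquiv (N : ℕ) : (Fin N → Fin 2) ≃ (Fin N → Fin 2) :=
  Equiv.piCongrRight fun _ => ⟨flipB, flipB, flipB_flipB, flipB_flipB⟩

lemma sum_Fc (N : ℕ) (hN : 0 < N) (hE : Even N) (ψ : (Fin N → Fin 2) → ℂ) :
    (∑ x : Fin N → Fin 2, Fc N ψ x) =
      2 * ∑ x : Fin N → Fin 2, if x ⟨0, hN⟩ = 0 then Fc N ψ x else 0 := by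
  have split : (∑ x : Fin N → Fin 2, Fc N ψ x) =
      (∑ x : Fin N → Fin 2, if x ⟨0, hN⟩ = 0 then Fc N ψ x else 0) +
      (∑ x : Fin N → Fin 2, if x ⟨0, hN⟩ = 0 then 0 else Fc N ψ x) := by
    rw [← Finset.sum_add_distrib]
    exact Finset.sum_congr rfl fun x _ => by split <;> ring
  have flip : (∑ x : Fin N → Fin 2, if x ⟨0, hN⟩ = 0 then Fc N ψ x else 0) =
      (∑ x : Fin N → Fin 2, if x ⟨0, hN⟩ = 0 then 0 else Fc N ψ x) := by
    refine Fintype.sum_equiv (flipEquiv N) _ _ fun x => ?_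
    have he : ∀ x : Fin N → Fin 2, flipEquiv N x = flipB ∘ x := fun _ => rfl
    simp only [he, Function.comp_apply, flipB_eq_zero_iff, Fc_flip N hE]
    split <;> simp_all
  rw [split, ← flip]; ring

lemma two_pow_eq (n : ℕ) : (4:ℕ)^n = 2^(2*n) := by
  rw [pow_mul]; norm_num

noncomputable def encEquiv (n : ℕ) : (Fin (2*n) → Fin 2) ≃ Fin (4^n) :=
  (qbitEquiv (2*n)).symm.trans (finCongr (two_pow_eq n).symm)

lemma qbit_encEquiv (n : ℕ) (x : Fin (2*n) → Fin 2) :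
    qbit (2*n) ((encEquiv n x : Fin (4^n)) : ℕ) = x := by
  have h : ((encEquiv n x : Fin (4^n)) : ℕ) = (((qbitEquiv (2*n)).symm x) : ℕ) := rfl
  rw [h, qbit_eq_equiv, Equiv.apply_symm_apply]

lemma encEquiv_qbit (n : ℕ) (j : Fin (4^n)) :
    encEquiv n (qbit (2*n) (j : ℕ)) = j := by
  have h : qbit (2*n) (j:ℕ) = qbitEquiv (2*n) (Fin.cast (two_pow_eq n) j) := by
    rw [← qbit_eq_equiv]; rfl
  rw [h]
  simp only [encEquiv, Equiv.trans_apply, Equiv.symm_apply_apply]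
  rfl

lemma quad_eq (n : ℕ) (ψ : (Fin (2*n) → Fin 2) → ℂ) :
    dotProduct (vecQ n ψ) ((pauliYPow n).mulVec (vecQ n ψ)) =
      (-1:ℂ)^n * ∑ x : Fin (2*n) → Fin 2, Fc (2*n) ψ x := by
  have expand : ∀ (M : Matrix (Fin (4^n)) (Fin (4^n)) ℂ) (v : Fin (4^n) → ℂ),
      dotProduct v (M.mulVec v) = ∑ i, ∑ j, v i * (M i j * v j) := by
    intro M v
    simp only [dotProduct, Matrix.mulVec, Finset.mul_sum]
  rw [expand, Finset.mul_sum,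
    ← Equiv.sum_comp (encEquiv n) (fun i => ∑ j, vecQ n ψ i * (pauliYPow n i j * vecQ n ψ j))]
  refine Finset.sum_congr rfl fun x _ => ?_
  conv_lhs => rw [← Equiv.sum_comp (encEquiv n)]
  simp only [vecQ, pauliYPow, qbit_encEquiv, prod_pauli, ite_mul, mul_ite, zero_mul, mul_zero]
  rw [Finset.sum_ite_eq' Finset.univ (flipB ∘ x)]
  simp only [Finset.mem_univ, if_true]
  have hI : (-Complex.I)^(2*n) = (-1:ℂ)^n := by
    rw [pow_mul, neg_sq, Complex.I_sq]
  rw [hI, Fc]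
  ring

lemma pauliYPow_isSymm (n : ℕ) : (pauliYPow n).IsSymm := by
  ext i j
  show (pauliYPow n) j i = pauliYPow n i j
  unfold pauliYPow
  calc (∏ k, pauliY (qbit (2*n) (j:ℕ) k) (qbit (2*n) (i:ℕ) k))
      = ∏ k, (-1:ℂ) * pauliY (qbit (2*n) (i:ℕ) k) (qbit (2*n) (j:ℕ) k) :=
        Finset.prod_congr rfl fun k _ => pauliY_antisymm _ _
    _ = (-1:ℂ)^(2*n) * ∏ k, pauliY (qbit (2*n) (i:ℕ) k) (qbit (2*n) (j:ℕ) k) := by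
        rw [Finset.prod_mul_distrib, Finset.prod_const, Finset.card_univ, Fintype.card_fin]
    _ = ∏ k, pauliY (qbit (2*n) (i:ℕ) k) (qbit (2*n) (j:ℕ) k) := by
        rw [Even.neg_one_pow ⟨n, two_mul n⟩, one_mul]

lemma part1 (n : ℕ) (hN : 0 < 2*n) (ψ : (Fin (2*n) → Fin 2) → ℂ) :
    hdetQ (2*n) hN ψ =
      ((-1 : ℂ) ^ n / 2) *
        dotProduct (vecQ n ψ) ((pauliYPow n).mulVec (vecQ n ψ)) := by
  rw [hdetQ_eq, quad_eq, sum_Fc (2*n) hN ⟨n, two_mul n⟩ ψ]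
  have h1 : ((-1:ℂ))^n * (-1)^n = 1 := by
    rw [← pow_add, Even.neg_one_pow ⟨n, rfl⟩]
  set S := ∑ x : Fin (2*n) → Fin 2, if x ⟨0, hN⟩ = 0 then Fc (2*n) ψ x else 0
  linear_combination (-S) * h1

lemma single_quad {m : Type*} [Fintype m] [DecidableEq m] (A : Matrix m m ℂ) (i j : m) :
    dotProduct (Pi.single i (1:ℂ)) (A.mulVec (Pi.single j 1)) = A i j := by
  simp [Matrix.mulVec_single, single_dotProduct]

lemma quadform_zero {m : Type*} [Fintype m] [DecidableEq m] {A : Matrix m m ℂ}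
    (hA : A.IsSymm) (h : ∀ v, dotProduct v (A.mulVec v) = 0) : A = 0 := by
  ext i j
  simp only [Matrix.zero_apply]
  have hii := h (Pi.single i 1)
  have hjj := h (Pi.single j 1)
  have hij := h (Pi.single i 1 + Pi.single j 1)
  rw [Matrix.mulVec_add, dotProduct_add, add_dotProduct,
    add_dotProduct] at hij
  rw [single_quad] at hii hjj
  rw [single_quad, single_quad, single_quad, single_quad] at hij
  have hs : A j i = A i j := hA.apply i j
  linear_combination (hij - hii - hjj - hs) / 2

lemma vecQ_surj (n : ℕ) (v : Fin (4^n) → ℂ) : ∃ φ, vecQ n φ = v := by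
  refine ⟨fun x => v (encEquiv n x), ?_⟩
  funext j
  simp only [vecQ, encEquiv_qbit]

/-- For any `2n`-qubit hypermatrix `ψ` (`n ≥ 1`),
`hdet(ψ̂) = ((−1)^n / 2) · |ψ⟩ᵀ σ_y^{⊗2n} |ψ⟩`; equivalently, the symmetric matrix `Ê_n` of
the quadratic form `hdet` satisfies `Ê_n = ((−1)^n / 2) σ_y^{⊗2n}`. -/
theorem hdet_eq_pauliYPow_quadform (n : ℕ) (hn : 1 ≤ n)
    (ψ : (Fin (2 * n) → Fin 2) → ℂ) :
    hdetQ (2 * n) (by omega) ψ =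
      ((-1 : ℂ) ^ n / 2) *
        dotProduct (vecQ n ψ) ((pauliYPow n).mulVec (vecQ n ψ)) ∧
      ∀ E : Matrix (Fin (4 ^ n)) (Fin (4 ^ n)) ℂ, E.IsSymm →
        (∀ φ : (Fin (2 * n) → Fin 2) → ℂ,
          dotProduct (vecQ n φ) (E.mulVec (vecQ n φ)) = hdetQ (2 * n) (by omega) φ) →
        E = ((-1 : ℂ) ^ n / 2) • pauliYPow n := by
  refine ⟨part1 n (by omega) ψ, ?_⟩
  intro E hE hq
  set c : ℂ := (-1:ℂ)^n / 2 with hc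
  have hM : (c • pauliYPow n).IsSymm := by
    rw [Matrix.IsSymm, Matrix.transpose_smul, pauliYPow_isSymm n]
  have key : ∀ v, dotProduct v ((E - c • pauliYPow n).mulVec v) = 0 := by
    intro v
    obtain ⟨φ, rfl⟩ := vecQ_surj n v
    rw [Matrix.sub_mulVec, dotProduct_sub, hq φ, part1 n (by omega) φ,
      Matrix.smul_mulVec, dotProduct_smul, smul_eq_mul, sub_self]
  have h0 := quadform_zero (hE.sub hM) key
  exact sub_eq_zero.mp h0
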